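/- The point (0,0) is a fixed point of F_η; the Jacobian of F_η at (0,0) equals the 2×2 real matrix [[1, −η(x_s−x_t)/2], [η(x_s−x_t)/2, 1]]; its complex eigenvalues are 1 ± (η/2)|x_s − x_t|·i; and both eigenvalues have modulus √(1 + η²(x_s−x_t)²/4) > 1 for every η > 0. Hence the local-convergence criterion requiring all eigenvalues of the Jacobian of the update operator at the fixed point to lie strictly inside the unit disc fails for every learning rate η > 0. -/

import Mathlib

open Real

noncomputable def sigm : ℝ → ℝ := fun t => Real.exp (-t) / (1 + Real.exp (-t))

lemma sigm_pos_denom (t : ℝ) : (0:ℝ) < 1 + Real.exp (-t) := by positivity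

lemma hf_deriv (t : ℝ) :
    HasDerivAt (fun t => Real.log (1 / (1 + Real.exp (-t)))) (sigm t) t := by
  have h1 : HasDerivAt (fun s : ℝ => 1 + Real.exp (-s)) (-Real.exp (-t)) t := by
    simpa using ((hasDerivAt_neg t).exp.const_add 1)
  have h2 : HasDerivAt (fun s : ℝ => 1 / (1 + Real.exp (-s)))
      (Real.exp (-t) / (1 + Real.exp (-t))^2) t := by
    have h := h1.inv (ne_of_gt (sigm_pos_denom t))
    have : -(-Real.exp (-t)) / (1 + Real.exp (-t))^2
        = Real.exp (-t) / (1 + Real.exp (-t))^2 := by ring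
    simpa [one_div, this, Pi.inv_def] using h
  have h3 := h2.log (by positivity)
  convert h3 using 1
  have hp := sigm_pos_denom t
  simp only [sigm]
  field_simp

lemma sigm_deriv (t : ℝ) :
    HasDerivAt sigm (-Real.exp (-t) / (1 + Real.exp (-t))^2) t := by
  have h1 : HasDerivAt (fun s:ℝ => Real.exp (-s)) (-Real.exp (-t)) t := by
    simpa using (hasDerivAt_neg t).exp
  have h2 : HasDerivAt (fun s : ℝ => 1 + Real.exp (-s)) (-Real.exp (-t)) t :=
    h1.const_add 1
  have h : HasDerivAt (fun s => Real.exp (-s) / (1 + Real.exp (-s))) _ t :=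
    h1.div h2 (ne_of_gt (sigm_pos_denom t))
  convert h using 1
  have hp := sigm_pos_denom t
  · funext s; simp only [sigm, div_eq_mul_inv]
  ring

lemma hfd (xs xt θ1 θ2 : ℝ) :
    HasDerivAt (fun a => Real.log (1 / (1 + Real.exp (-(θ2 * a * xs))))
        + Real.log (1 / (1 + Real.exp (-(-(θ2 * a * xt))))))
      (θ2 * xs * sigm (θ2 * θ1 * xs) - θ2 * xt * sigm (-(θ2 * θ1 * xt))) θ1 := by
  have i1 : HasDerivAt (fun a : ℝ => θ2 * a * xs) (θ2 * xs) θ1 := by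
    simpa using ((hasDerivAt_id θ1).const_mul θ2).mul_const xs
  have i2 : HasDerivAt (fun a : ℝ => -(θ2 * a * xt)) (-(θ2 * xt)) θ1 := by
    simpa [Pi.neg_def] using (((hasDerivAt_id θ1).const_mul θ2).mul_const xt).neg
  have c1 := (hf_deriv (θ2 * θ1 * xs)).comp θ1 i1
  have c2 := (hf_deriv (-(θ2 * θ1 * xt))).comp θ1 i2
  have h := c1.add c2
  have e : sigm (θ2 * θ1 * xs) * (θ2 * xs) + sigm (-(θ2 * θ1 * xt)) * (-(θ2 * xt))
      = θ2 * xs * sigm (θ2 * θ1 * xs) - θ2 * xt * sigm (-(θ2 * θ1 * xt)) := by ring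
  rw [e] at h
  exact h

lemma hfd_b (xs xt θ1 θ2 : ℝ) :
    HasDerivAt (fun b => Real.log (1 / (1 + Real.exp (-(b * θ1 * xs))))
        + Real.log (1 / (1 + Real.exp (-(-(b * θ1 * xt))))))
      (θ1 * xs * sigm (θ2 * θ1 * xs) - θ1 * xt * sigm (-(θ2 * θ1 * xt))) θ2 := by
  have i1 : HasDerivAt (fun b : ℝ => b * θ1 * xs) (θ1 * xs) θ2 := by
    simpa using ((hasDerivAt_id θ2).mul_const θ1).mul_const xs
  have i2 : HasDerivAt (fun b : ℝ => -(b * θ1 * xt)) (-(θ1 * xt)) θ2 := by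
    simpa [Pi.neg_def] using (((hasDerivAt_id θ2).mul_const θ1).mul_const xt).neg
  have c1 := (hf_deriv (θ2 * θ1 * xs)).comp θ2 i1
  have c2 := (hf_deriv (-(θ2 * θ1 * xt))).comp θ2 i2
  have h := c1.add c2
  have e : sigm (θ2 * θ1 * xs) * (θ1 * xs) + sigm (-(θ2 * θ1 * xt)) * (-(θ1 * xt))
      = θ1 * xs * sigm (θ2 * θ1 * xs) - θ1 * xt * sigm (-(θ2 * θ1 * xt)) := by ring
  rw [e] at h
  exact h

/-- For the toy DANN objective `d(θe, θd) = f(θd θe x_s) + f(−θd θe x_t)`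
with `f(t) = log(1/(1+exp(−t)))`, the simultaneous gradient descent operator
`F_η(θe, θd) = (θe − η ∂d/∂θe, θd + η ∂d/∂θd)` fixes (0,0); its Jacobian there is
`[[1, −η(x_s−x_t)/2], [η(x_s−x_t)/2, 1]]`, whose complex eigenvalues are
`1 ± (η/2)|x_s − x_t| i`, both of modulus `√(1 + η²(x_s−x_t)²/4) > 1`; hence the
criterion that all eigenvalues lie strictly inside the unit disc fails for every η > 0. -/
theorem stmt13 (xs xt : ℝ) (hx : xs ≠ xt) (η : ℝ) (hη : 0 < η) :
    let f : ℝ → ℝ := fun t => Real.log (1 / (1 + Real.exp (-t)))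
    let d : ℝ → ℝ → ℝ := fun θe θd => f (θd * θe * xs) + f (-(θd * θe * xt))
    let F : ℝ × ℝ → ℝ × ℝ := fun θ =>
      (θ.1 - η * deriv (fun a => d a θ.2) θ.1, θ.2 + η * deriv (fun b => d θ.1 b) θ.2)
    let J : Matrix (Fin 2) (Fin 2) ℝ :=
      !![1, -(η * (xs - xt) / 2); η * (xs - xt) / 2, 1]
    let Jc : Matrix (Fin 2) (Fin 2) ℂ := J.map (fun a => (a : ℂ))
    F (0, 0) = (0, 0) ∧
    (∀ v : ℝ × ℝ, fderiv ℝ F (0, 0) v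
        = (J 0 0 * v.1 + J 0 1 * v.2, J 1 0 * v.1 + J 1 1 * v.2)) ∧
    spectrum ℂ Jc =
      {(1 : ℂ) + ((η / 2 * |xs - xt| : ℝ) : ℂ) * Complex.I,
       (1 : ℂ) - ((η / 2 * |xs - xt| : ℝ) : ℂ) * Complex.I} ∧
    (∀ μ ∈ spectrum ℂ Jc,
       ‖μ‖ = Real.sqrt (1 + η ^ 2 * (xs - xt) ^ 2 / 4) ∧ 1 < ‖μ‖) ∧
    ¬ (∀ μ ∈ spectrum ℂ Jc, ‖μ‖ < 1) := by
  intro f d F J Jc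
  -- Part 1: fixed point
  have h1 : F (0, 0) = (0, 0) := by
    have e1 : deriv (fun a => d a 0) 0 = 0 := by
      have h : HasDerivAt (fun a => d a 0)
          ((0:ℝ) * xs * sigm (0 * 0 * xs) - 0 * xt * sigm (-(0 * 0 * xt))) 0 :=
        hfd xs xt 0 0
      rw [h.deriv]; ring
    have e2 : deriv (fun b => d 0 b) 0 = 0 := by
      have h : HasDerivAt (fun b => d 0 b)
          ((0:ℝ) * xs * sigm (0 * 0 * xs) - 0 * xt * sigm (-(0 * 0 * xt))) 0 :=
        hfd_b xs xt 0 0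
      rw [h.deriv]; ring
    show ((0:ℝ) - η * deriv (fun a => d a (0:ℝ)) 0,
        (0:ℝ) + η * deriv (fun b => d (0:ℝ) b) 0) = ((0:ℝ), (0:ℝ))
    rw [e1, e2]; norm_num
  -- Part 2: Jacobian
  have h2 : ∀ v : ℝ × ℝ, fderiv ℝ F (0, 0) v
      = (J 0 0 * v.1 + J 0 1 * v.2, J 1 0 * v.1 + J 1 1 * v.2) := by
    have Feq : F = fun θ : ℝ × ℝ =>
        (θ.1 - η * (θ.2 * xs * sigm (θ.2 * θ.1 * xs) - θ.2 * xt * sigm (-(θ.2 * θ.1 * xt))),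
         θ.2 + η * (θ.1 * xs * sigm (θ.2 * θ.1 * xs) - θ.1 * xt * sigm (-(θ.2 * θ.1 * xt)))) := by
      funext θ
      show (θ.1 - η * deriv (fun a => d a θ.2) θ.1,
          θ.2 + η * deriv (fun b => d θ.1 b) θ.2) = _
      have ha : HasDerivAt (fun a => d a θ.2)
          (θ.2 * xs * sigm (θ.2 * θ.1 * xs) - θ.2 * xt * sigm (-(θ.2 * θ.1 * xt))) θ.1 :=
        hfd xs xt θ.1 θ.2
      have hb : HasDerivAt (fun b => d θ.1 b)
          (θ.1 * xs * sigm (θ.2 * θ.1 * xs) - θ.1 * xt * sigm (-(θ.2 * θ.1 * xt))) θ.2 :=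
        hfd_b xs xt θ.1 θ.2
      rw [ha.deriv, hb.deriv]
    intro v
    rw [Feq]
    have hs : HasFDerivAt (fun θ : ℝ × ℝ => θ.2) (ContinuousLinearMap.snd ℝ ℝ ℝ)
        ((0:ℝ), (0:ℝ)) := hasFDerivAt_snd
    have hfs : HasFDerivAt (fun θ : ℝ × ℝ => θ.1) (ContinuousLinearMap.fst ℝ ℝ ℝ)
        ((0:ℝ), (0:ℝ)) := hasFDerivAt_fst
    have hu1 := (hs.mul hfs).mul_const xs
    have hu2 := ((hs.mul hfs).mul_const xt).neg
    have hA1 := (sigm_deriv 0).comp_hasFDerivAt_of_eq ((0:ℝ), (0:ℝ)) hu1 (by norm_num)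
    have hA2 := (sigm_deriv 0).comp_hasFDerivAt_of_eq ((0:ℝ), (0:ℝ)) hu2 (by norm_num)
    have hg := ((hs.mul_const xs).mul hA1).sub ((hs.mul_const xt).mul hA2)
    have hh := ((hfs.mul_const xs).mul hA1).sub ((hfs.mul_const xt).mul hA2)
    have hF := (hfs.sub (hg.const_mul η)).prodMk (hs.add (hh.const_mul η))
    have hF' : HasFDerivAt (fun θ : ℝ × ℝ =>
        (θ.1 - η * (θ.2 * xs * sigm (θ.2 * θ.1 * xs) - θ.2 * xt * sigm (-(θ.2 * θ.1 * xt))),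
         θ.2 + η * (θ.1 * xs * sigm (θ.2 * θ.1 * xs) - θ.1 * xt * sigm (-(θ.2 * θ.1 * xt)))))
        _ ((0:ℝ), (0:ℝ)) := hF
    rw [hF'.fderiv]
    have hJ00 : J 0 0 = 1 := rfl
    have hJ01 : J 0 1 = -(η * (xs - xt) / 2) := rfl
    have hJ10 : J 1 0 = η * (xs - xt) / 2 := rfl
    have hJ11 : J 1 1 = 1 := rfl
    rw [hJ00, hJ01, hJ10, hJ11]
    simp [sigm, ContinuousLinearMap.prod_apply]
    norm_num [Real.exp_zero]
    constructor <;> ring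
  -- Part 3: spectrum
  have hJc : Jc = !![(1:ℂ), -((η * (xs - xt) / 2 : ℝ) : ℂ); ((η * (xs - xt) / 2 : ℝ) : ℂ), 1] := by
    ext i j
    fin_cases i <;> fin_cases j <;> simp [Jc, J]
  have h3 : spectrum ℂ Jc =
      {(1 : ℂ) + ((η / 2 * |xs - xt| : ℝ) : ℂ) * Complex.I,
       (1 : ℂ) - ((η / 2 * |xs - xt| : ℝ) : ℂ) * Complex.I} := by
    rw [hJc]
    set c : ℝ := η * (xs - xt) / 2 with hc
    set k : ℝ := η / 2 * |xs - xt| with hk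
    have hk2 : (k:ℝ)^2 = c^2 := by
      rw [hk, hc, mul_pow, sq_abs]; ring
    ext μ
    simp only [Set.mem_insert_iff, Set.mem_singleton_iff]
    rw [spectrum.mem_iff, Matrix.isUnit_iff_isUnit_det, isUnit_iff_ne_zero, not_not]
    have hM : algebraMap ℂ (Matrix (Fin 2) (Fin 2) ℂ) μ - !![(1:ℂ), -(c:ℂ); (c:ℂ), 1]
        = !![μ - 1, (c:ℂ); -(c:ℂ), μ - 1] := by
      rw [Algebra.algebraMap_eq_smul_one]
      ext i j; fin_cases i <;> fin_cases j <;> simp [Matrix.one_apply]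
    rw [hM, Matrix.det_fin_two_of]
    have key : (μ - 1) * (μ - 1) - (c:ℂ) * (-(c:ℂ))
        = (μ - ((1:ℂ) + (k:ℂ) * Complex.I)) * (μ - ((1:ℂ) - (k:ℂ) * Complex.I)) := by
      have h2' : ((k:ℂ))^2 = ((c:ℂ))^2 := by
        rw [← Complex.ofReal_pow, ← Complex.ofReal_pow, hk2]
      have : ((k:ℂ) * Complex.I) * ((k:ℂ) * Complex.I) = -(c:ℂ)*(c:ℂ) := by
        calc ((k:ℂ) * Complex.I) * ((k:ℂ) * Complex.I)
            = (k:ℂ)^2 * (Complex.I*Complex.I) := by ring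
          _ = -(c:ℂ)*(c:ℂ) := by rw [Complex.I_mul_I, h2']; ring
      linear_combination this
    rw [key, mul_eq_zero, sub_eq_zero, sub_eq_zero]
  -- Part 4: moduli
  have h4 : ∀ μ ∈ spectrum ℂ Jc,
      ‖μ‖ = Real.sqrt (1 + η ^ 2 * (xs - xt) ^ 2 / 4) ∧ 1 < ‖μ‖ := by
    rw [h3]
    set k : ℝ := η / 2 * |xs - xt| with hk
    have hkpos : 0 < k := by
      have : 0 < |xs - xt| := abs_pos.mpr (sub_ne_zero.mpr hx)
      positivity
    have habs : ∀ s : ℝ, ‖(1:ℂ) + (s:ℂ) * Complex.I‖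
        = Real.sqrt (1 + s ^ 2) := by
      intro s
      rw [Complex.norm_def, Complex.normSq_apply]
      simp [pow_two]
    have habs' : ∀ s : ℝ, ‖(1:ℂ) - (s:ℂ) * Complex.I‖
        = Real.sqrt (1 + s ^ 2) := by
      intro s
      rw [Complex.norm_def, Complex.normSq_apply]
      simp [pow_two]
    have hval : Real.sqrt (1 + k ^ 2) = Real.sqrt (1 + η ^ 2 * (xs - xt) ^ 2 / 4) := by
      congr 1
      rw [hk, mul_pow, sq_abs]; ring
    have hgt : 1 < Real.sqrt (1 + k ^ 2) := by
      have h1' : Real.sqrt 1 < Real.sqrt (1 + k ^ 2) :=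
        Real.sqrt_lt_sqrt (by norm_num) (by nlinarith)
      simpa using h1'
    intro μ hμ
    rcases hμ with h | h <;> subst h
    · rw [habs k]
      exact ⟨hval, hgt⟩
    · rw [habs' k]
      exact ⟨hval, hgt⟩
  -- Part 5
  have h5 : ¬ (∀ μ ∈ spectrum ℂ Jc, ‖μ‖ < 1) := by
    intro hall
    have hmem : (1 : ℂ) + ((η / 2 * |xs - xt| : ℝ) : ℂ) * Complex.I ∈ spectrum ℂ Jc := by
      rw [h3]; left; rfl
    have := hall _ hmem
    have := (h4 _ hmem).2
    linarith
  exact ⟨h1, h2, h3, h4, h5⟩
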